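/- Let V be a finite set and 𝒞 = {C_1, …, C_m} a finite set of betweenness constraints over V. For every function φ : V → {0,1,2,3} there exists a φ-compatible bijection α : V → {1, …, |V|} satisfying at least m/3 + X(φ) constraints of 𝒞, where X(φ) = Σ_{p=1}^m w(C_p, φ). -/

import Mathlib

open scoped Classical

noncomputable section

/-- A betweenness constraint `(v, {x, y})`: a variable together with an unordered pair. -/
abbrev Constraint (V : Type*) := V × Sym2 V

/-- The elements of a betweenness constraint are pairwise distinct. -/
def IsProperConstraint {V : Type*} (C : Constraint V) : Prop :=
  ∃ x y, C.2 = s(x, y) ∧ x ≠ y ∧ C.1 ≠ x ∧ C.1 ≠ y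

/-- A bijection `α : V → {1, …, |V|}` satisfies the constraint `(v, {x, y})` if
`α x < α v < α y` or `α y < α v < α x`. -/
def Satisfies {V : Type*} [Fintype V] (α : V ≃ Fin (Fintype.card V)) (C : Constraint V) : Prop :=
  ∃ x y, C.2 = s(x, y) ∧ α x < α C.1 ∧ α C.1 < α y

/-- The number of constraints of `𝒞` satisfied by `α`. -/
def satCount {V : Type*} [Fintype V] (α : V ≃ Fin (Fintype.card V))
    (𝒞 : Finset (Constraint V)) : ℕ :=
  (𝒞.filter fun C => Satisfies α C).card

/-- The complete triple of betweenness constraints on `{u, v, w}`. -/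
def completeTriple {V : Type*} [DecidableEq V] (u v w : V) : Finset (Constraint V) :=
  {(u, s(v, w)), (v, s(u, w)), (w, s(u, v))}

/-- An instance is irreducible if it contains no complete triple. -/
def IrreducibleInstance {V : Type*} [DecidableEq V] (𝒞 : Finset (Constraint V)) : Prop :=
  ¬ ∃ u v w : V, u ≠ v ∧ u ≠ w ∧ v ≠ w ∧ completeTriple u v w ⊆ 𝒞

/-- The weight `w(C, φ)` of a constraint `(vᵢ, {vⱼ, vₖ})` under `φ : V → {0,1,2,3}`. -/
def weight {V : Type*} (φ : V → Fin 4) (C : Constraint V) : ℝ :=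
  if (C.2.map φ).IsDiag ∧ φ C.1 ∈ C.2.map φ then 0
  else if (C.2.map φ).IsDiag then -1/3
  else if φ C.1 ∈ C.2.map φ then 1/6
  else if ∃ x y : Fin 4, C.2.map φ = s(x, y) ∧ x < φ C.1 ∧ φ C.1 < y then 2/3
  else -1/3

/-- `α` is `φ`-compatible if `φ u < φ v` implies `α u < α v`. -/
def Compatible {V : Type*} [Fintype V] (φ : V → Fin 4)
    (α : V ≃ Fin (Fintype.card V)) : Prop :=
  ∀ u v : V, φ u < φ v → α u < α v

set_option linter.unusedSectionVars false

namespace BTWAux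

open Finset

variable {V : Type*} [Fintype V] [DecidableEq V]

/-- The lexicographic key used to define the compatible ordering. -/
def fkey (φ : V → Fin 4) (β : V ≃ Fin (Fintype.card V)) (v : V) :
    Lex (Fin 4 × Fin (Fintype.card V)) := toLex (φ v, β v)

lemma fkey_inj (φ : V → Fin 4) (β : V ≃ Fin (Fintype.card V)) :
    Function.Injective (fkey φ β) := by
  intro u v h
  have h2 : (φ u, β u) = (φ v, β v) := h
  exact β.injective (congrArg Prod.snd h2)

lemma exists_ord (φ : V → Fin 4) (β : V ≃ Fin (Fintype.card V)) :
    ∃ α : V ≃ Fin (Fintype.card V),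
      ∀ u v, α u < α v ↔ fkey φ β u < fkey φ β v := by
  set f := fkey φ β with hf
  set S : Finset (Lex (Fin 4 × Fin (Fintype.card V))) := Finset.univ.image f with hS
  have hcard : S.card = Fintype.card V := by
    rw [hS, Finset.card_image_of_injective _ (fkey_inj φ β), Finset.card_univ]
  let e := S.orderIsoOfFin hcard
  have hmem : ∀ v, f v ∈ S := fun v => Finset.mem_image_of_mem f (Finset.mem_univ v)
  let g : V → Fin (Fintype.card V) := fun v => e.symm ⟨f v, hmem v⟩
  have hginj : Function.Injective g := by
    intro u v h
    exact fkey_inj φ β (congrArg Subtype.val (e.symm.injective h))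
  refine ⟨Equiv.ofBijective g ((Fintype.bijective_iff_injective_and_card g).2 ⟨hginj, by simp⟩),
    fun u v => ?_⟩
  show g u < g v ↔ f u < f v
  rw [show (f u < f v) ↔ (⟨f u, hmem u⟩ : {x // x ∈ S}) < ⟨f v, hmem v⟩ from Iff.rfl.symm]
  exact e.symm.lt_iff_lt

/-- The φ-compatible ordering induced by β. -/
def ord (φ : V → Fin 4) (β : V ≃ Fin (Fintype.card V)) : V ≃ Fin (Fintype.card V) :=
  (exists_ord φ β).choose

lemma ord_lt_iff (φ : V → Fin 4) (β : V ≃ Fin (Fintype.card V)) (u v : V) :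
    ord φ β u < ord φ β v ↔ toLex (φ u, β u) < toLex (φ v, β v) :=
  (exists_ord φ β).choose_spec u v

lemma ord_compatible (φ : V → Fin 4) (β : V ≃ Fin (Fintype.card V)) :
    Compatible φ (ord φ β) := by
  intro u v h
  rw [ord_lt_iff]
  exact Prod.Lex.lt_iff.2 (Or.inl h)

lemma satisfies_iff {α : V ≃ Fin (Fintype.card V)} {v x y : V} :
    Satisfies α (v, s(x, y)) ↔ (α x < α v ∧ α v < α y) ∨ (α y < α v ∧ α v < α x) := by
  constructor
  · rintro ⟨x', y', h, h1, h2⟩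
    rw [show ((v, s(x,y)) : Constraint V).2 = s(x,y) from rfl, Sym2.eq_iff] at h
    rcases h with ⟨rfl, rfl⟩ | ⟨rfl, rfl⟩
    · exact Or.inl ⟨h1, h2⟩
    · exact Or.inr ⟨h1, h2⟩
  · rintro (⟨h1, h2⟩ | ⟨h1, h2⟩)
    · exact ⟨x, y, rfl, h1, h2⟩
    · exact ⟨y, x, Sym2.eq_swap, h1, h2⟩

lemma swap_trans_swap_trans (a b : V) (β : V ≃ Fin (Fintype.card V)) :
    (Equiv.swap a b).trans ((Equiv.swap a b).trans β) = β := by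
  ext w
  simp [Equiv.swap_apply_self]

lemma card_filter_trans_swap (a b : V) (p : (V ≃ Fin (Fintype.card V)) → Prop)
    [DecidablePred p] [DecidablePred fun β => p ((Equiv.swap a b).trans β)] :
    (univ.filter fun β => p ((Equiv.swap a b).trans β)).card = (univ.filter p).card := by
  refine Finset.card_bij' (fun β _ => (Equiv.swap a b).trans β)
    (fun β _ => (Equiv.swap a b).trans β) ?_ ?_ ?_ ?_
  · intro β hβ
    simp only [mem_filter, mem_univ, true_and] at hβ ⊢
    exact hβ
  · intro β hβ
    simp only [mem_filter, mem_univ, true_and] at hβ ⊢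
    rw [swap_trans_swap_trans]; exact hβ
  · intro β _; exact swap_trans_swap_trans a b β
  · intro β _; exact swap_trans_swap_trans a b β

lemma filter_eq_of_iff {p q : (V ≃ Fin (Fintype.card V)) → Prop} [DecidablePred p]
    [DecidablePred q] (h : ∀ β, p β ↔ q β) :
    (univ.filter p) = (univ.filter q) := by
  ext β
  simp [h β]

lemma card_swap_congr (a b : V) (p q : (V ≃ Fin (Fintype.card V)) → Prop) [DecidablePred p]
    [DecidablePred q] (h : ∀ β, p β ↔ q ((Equiv.swap a b).trans β)) :
    (univ.filter p).card = (univ.filter q).card := by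
  rw [filter_eq_of_iff h]
  exact card_filter_trans_swap a b q

/-- `v` lies in the middle of `x` and `y` under `β`. -/
def Mid (β : V ≃ Fin (Fintype.card V)) (x v y : V) : Prop :=
  (β x < β v ∧ β v < β y) ∨ (β y < β v ∧ β v < β x)

lemma card_pair (x v : V) (hxv : x ≠ v) :
    2 * (univ.filter fun β : V ≃ Fin (Fintype.card V) => β x < β v).card =
      Fintype.card (V ≃ Fin (Fintype.card V)) := by
  have h1 : (univ.filter fun β : V ≃ Fin (Fintype.card V) => β v < β x).card =
      (univ.filter fun β : V ≃ Fin (Fintype.card V) => β x < β v).card := by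
    apply card_swap_congr x v
    intro β
    simp
  have hneg : (univ.filter fun β : V ≃ Fin (Fintype.card V) => ¬ β x < β v) =
      (univ.filter fun β : V ≃ Fin (Fintype.card V) => β v < β x) := by
    apply filter_eq_of_iff
    intro β
    have hne : β x ≠ β v := fun h => hxv (β.injective h)
    constructor
    · intro h; exact lt_of_le_of_ne (not_lt.1 h) hne.symm
    · intro h; exact not_lt.2 h.le
  have h2 := Finset.card_filter_add_card_filter_not
    (s := (univ : Finset (V ≃ Fin (Fintype.card V))))
    (fun β : V ≃ Fin (Fintype.card V) => β x < β v)
  rw [hneg, Finset.card_univ] at h2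
  omega

lemma card_mid (x v y : V) (hxv : x ≠ v) (hxy : x ≠ y) (hvy : v ≠ y) :
    3 * (univ.filter fun β : V ≃ Fin (Fintype.card V) => Mid β x v y).card =
      Fintype.card (V ≃ Fin (Fintype.card V)) := by
  have e1 : (univ.filter fun β : V ≃ Fin (Fintype.card V) => Mid β v x y).card =
      (univ.filter fun β : V ≃ Fin (Fintype.card V) => Mid β x v y).card := by
    apply card_swap_congr x v
    intro β
    simp only [Mid, Equiv.trans_apply, Equiv.swap_apply_left, Equiv.swap_apply_right,
      Equiv.swap_apply_of_ne_of_ne (Ne.symm hxy) (Ne.symm hvy)]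
  have e2 : (univ.filter fun β : V ≃ Fin (Fintype.card V) => Mid β x y v).card =
      (univ.filter fun β : V ≃ Fin (Fintype.card V) => Mid β x v y).card := by
    apply card_swap_congr v y
    intro β
    simp only [Mid, Equiv.trans_apply, Equiv.swap_apply_left, Equiv.swap_apply_right,
      Equiv.swap_apply_of_ne_of_ne hxv hxy]
  have hsum : (univ.filter fun β : V ≃ Fin (Fintype.card V) => Mid β x v y).card +
      (univ.filter fun β : V ≃ Fin (Fintype.card V) => Mid β v x y).card +
      (univ.filter fun β : V ≃ Fin (Fintype.card V) => Mid β x y v).card =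
      Fintype.card (V ≃ Fin (Fintype.card V)) := by
    rw [show Fintype.card (V ≃ Fin (Fintype.card V)) =
        (univ : Finset (V ≃ Fin (Fintype.card V))).card from (Finset.card_univ).symm,
      Finset.card_filter, Finset.card_filter, Finset.card_filter,
      Finset.card_eq_sum_ones, ← Finset.sum_add_distrib, ← Finset.sum_add_distrib]
    apply Finset.sum_congr rfl
    intro β _
    have d1 : (β x : ℕ) ≠ β v := fun h => hxv (β.injective (Fin.val_injective h))
    have d2 : (β x : ℕ) ≠ β y := fun h => hxy (β.injective (Fin.val_injective h))
    have d3 : (β v : ℕ) ≠ β y := fun h => hvy (β.injective (Fin.val_injective h))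
    simp only [Mid, Fin.lt_def]
    by_cases h1 : ((β x : ℕ) < β v ∧ (β v : ℕ) < β y) ∨ ((β y : ℕ) < β v ∧ (β v : ℕ) < β x) <;>
      by_cases h2 : ((β v : ℕ) < β x ∧ (β x : ℕ) < β y) ∨ ((β y : ℕ) < β x ∧ (β x : ℕ) < β v) <;>
      by_cases h3 : ((β x : ℕ) < β y ∧ (β y : ℕ) < β v) ∨ ((β v : ℕ) < β y ∧ (β y : ℕ) < β x) <;>
      simp only [h1, h2, h3, if_true, if_false] <;> omega
  omega

lemma key_bound (φ : V → Fin 4) (v x y : V) (hxy : x ≠ y) (hvx : v ≠ x) (hvy : v ≠ y) :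
    (Fintype.card (V ≃ Fin (Fintype.card V)) : ℝ) * (1/3 + weight φ ((v, s(x, y)) : Constraint V)) ≤
      ((univ.filter fun β => Satisfies (ord φ β) ((v, s(x, y)) : Constraint V)).card : ℝ) := by
  have hpred : ∀ β : V ≃ Fin (Fintype.card V),
      Satisfies (ord φ β) ((v, s(x, y)) : Constraint V) ↔
      ((toLex (φ x, β x) < toLex (φ v, β v) ∧ toLex (φ v, β v) < toLex (φ y, β y)) ∨
       (toLex (φ y, β y) < toLex (φ v, β v) ∧ toLex (φ v, β v) < toLex (φ x, β x))) := by
    intro β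
    simp only [satisfies_iff, ord_lt_iff]
  by_cases hbc : φ x = φ y
  · by_cases hab : φ v = φ x
    · -- all three colors equal
      have hw : weight φ ((v, s(x, y)) : Constraint V) = 0 := by
        simp [weight, Sym2.map_pair_eq, Sym2.mk_isDiag_iff, Sym2.mem_iff, hbc, hab]
      rw [hw]
      have hfe : (univ.filter fun β => Satisfies (ord φ β) ((v, s(x, y)) : Constraint V)) =
          (univ.filter fun β : V ≃ Fin (Fintype.card V) => Mid β x v y) := by
        apply filter_eq_of_iff
        intro β
        rw [hpred β]
        simp only [Mid, Prod.Lex.lt_iff, ofLex_toLex, hab, hbc, lt_self_iff_false, false_or, true_and]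
      rw [hfe]
      have hm3 := card_mid x v y (Ne.symm hvx) hxy hvy
      have h1 := congrArg (Nat.cast : ℕ → ℝ) hm3
      push_cast at h1
      linarith
    · -- φ x = φ y ≠ φ v
      have hac : φ v ≠ φ y := fun h => hab (h.trans hbc.symm)
      have hw : weight φ ((v, s(x, y)) : Constraint V) = -1/3 := by
        simp [weight, Sym2.map_pair_eq, Sym2.mk_isDiag_iff, Sym2.mem_iff, hbc, hab, hac]
      rw [hw]
      have : (1:ℝ)/3 + -1/3 = 0 := by norm_num
      rw [this, mul_zero]
      positivity
  · by_cases hmem : φ v = φ x ∨ φ v = φ y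
    · -- exactly two colors among x, y match v
      have hw : weight φ ((v, s(x, y)) : Constraint V) = 1/6 := by
        unfold weight
        simp only [Sym2.map_pair_eq, Sym2.mk_isDiag_iff, Sym2.mem_iff]
        rw [if_neg (by tauto), if_neg hbc, if_pos hmem]
      rw [hw]
      have goal_of : ∀ p q : V, p ≠ q →
          (univ.filter fun β : V ≃ Fin (Fintype.card V) => β p < β q) ⊆
            (univ.filter fun β => Satisfies (ord φ β) ((v, s(x, y)) : Constraint V)) →
          (Fintype.card (V ≃ Fin (Fintype.card V)) : ℝ) * (1/3 + 1/6) ≤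
            ((univ.filter fun β => Satisfies (ord φ β) ((v, s(x, y)) : Constraint V)).card : ℝ) := by
        intro p q hpq hsub
        have hN := card_pair p q hpq
        have hcard := Finset.card_le_card hsub
        have h1 := congrArg (Nat.cast : ℕ → ℝ) hN
        push_cast at h1
        have h2 : ((univ.filter fun β : V ≃ Fin (Fintype.card V) => β p < β q).card : ℝ) ≤
            ((univ.filter fun β => Satisfies (ord φ β) ((v, s(x, y)) : Constraint V)).card : ℝ) :=
          Nat.cast_le.2 hcard
        linarith
      rcases hmem with hax | hay
      · rcases lt_or_gt_of_ne hbc with hlt | hgt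
        · refine goal_of x v (Ne.symm hvx) ?_
          intro β hβ
          simp only [mem_filter, mem_univ, true_and] at hβ ⊢
          rw [hpred β]
          exact Or.inl ⟨Prod.Lex.lt_iff.2 (Or.inr ⟨hax.symm, hβ⟩),
            Prod.Lex.lt_iff.2 (Or.inl (by rw [hax]; exact hlt))⟩
        · refine goal_of v x hvx ?_
          intro β hβ
          simp only [mem_filter, mem_univ, true_and] at hβ ⊢
          rw [hpred β]
          exact Or.inr ⟨Prod.Lex.lt_iff.2 (Or.inl (by rw [hax]; exact hgt)),
            Prod.Lex.lt_iff.2 (Or.inr ⟨hax, hβ⟩)⟩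
      · rcases lt_or_gt_of_ne hbc with hlt | hgt
        · refine goal_of v y hvy ?_
          intro β hβ
          simp only [mem_filter, mem_univ, true_and] at hβ ⊢
          rw [hpred β]
          exact Or.inl ⟨Prod.Lex.lt_iff.2 (Or.inl (by rw [hay]; exact hlt)),
            Prod.Lex.lt_iff.2 (Or.inr ⟨hay, hβ⟩)⟩
        · refine goal_of y v (Ne.symm hvy) ?_
          intro β hβ
          simp only [mem_filter, mem_univ, true_and] at hβ ⊢
          rw [hpred β]
          exact Or.inr ⟨Prod.Lex.lt_iff.2 (Or.inr ⟨hay.symm, hβ⟩),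
            Prod.Lex.lt_iff.2 (Or.inl (by rw [hay]; exact hgt))⟩
    · push_neg at hmem
      obtain ⟨hax, hay⟩ := hmem
      by_cases hbtw : (φ x < φ v ∧ φ v < φ y) ∨ (φ y < φ v ∧ φ v < φ x)
      · have hw : weight φ ((v, s(x, y)) : Constraint V) = 2/3 := by
          unfold weight
          simp only [Sym2.map_pair_eq, Sym2.mk_isDiag_iff, Sym2.mem_iff]
          rw [if_neg (by tauto), if_neg hbc, if_neg (by tauto), if_pos ?_]
          rcases hbtw with ⟨h1, h2⟩ | ⟨h1, h2⟩
          · exact ⟨φ x, φ y, rfl, h1, h2⟩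
          · exact ⟨φ y, φ x, Sym2.eq_swap, h1, h2⟩
        rw [hw]
        have hfe : (univ.filter fun β => Satisfies (ord φ β) ((v, s(x, y)) : Constraint V)) =
            (univ : Finset (V ≃ Fin (Fintype.card V))) := by
          apply Finset.filter_true_of_mem
          intro β _
          rw [hpred β]
          rcases hbtw with ⟨h1, h2⟩ | ⟨h1, h2⟩
          · exact Or.inl ⟨Prod.Lex.lt_iff.2 (Or.inl h1),
              Prod.Lex.lt_iff.2 (Or.inl h2)⟩
          · exact Or.inr ⟨Prod.Lex.lt_iff.2 (Or.inl h1),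
              Prod.Lex.lt_iff.2 (Or.inl h2)⟩
        rw [hfe, Finset.card_univ]
        norm_num
      · have hw : weight φ ((v, s(x, y)) : Constraint V) = -1/3 := by
          unfold weight
          simp only [Sym2.map_pair_eq, Sym2.mk_isDiag_iff, Sym2.mem_iff]
          rw [if_neg (by tauto), if_neg hbc, if_neg (by tauto), if_neg ?_]
          rintro ⟨a, b, heq, h1, h2⟩
          rw [Sym2.eq_iff] at heq
          rcases heq with ⟨rfl, rfl⟩ | ⟨rfl, rfl⟩
          · exact hbtw (Or.inl ⟨h1, h2⟩)
          · exact hbtw (Or.inr ⟨h1, h2⟩)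
        rw [hw]
        have : (1:ℝ)/3 + -1/3 = 0 := by norm_num
        rw [this, mul_zero]
        positivity

end BTWAux

theorem exists_compatible_bijection_above_expectation
    {V : Type*} [Fintype V] [DecidableEq V]
    (𝒞 : Finset (Constraint V)) (m : ℕ) (hm : 𝒞.card = m)
    (h𝒞 : ∀ C ∈ 𝒞, IsProperConstraint C) (φ : V → Fin 4) :
    ∃ α : V ≃ Fin (Fintype.card V), Compatible φ α ∧
      (m : ℝ) / 3 + ∑ C ∈ 𝒞, weight φ C ≤ satCount α 𝒞 := by
  classical
  haveI : Nonempty (V ≃ Fin (Fintype.card V)) := ⟨Fintype.equivFin V⟩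
  set X : ℝ := ∑ C ∈ 𝒞, weight φ C with hX
  set N : ℕ := Fintype.card (V ≃ Fin (Fintype.card V)) with hN
  have key : ∀ C ∈ 𝒞, (N : ℝ) * (1/3 + weight φ C) ≤
      ((Finset.univ.filter fun β => Satisfies (BTWAux.ord φ β) C).card : ℝ) := by
    intro C hC
    obtain ⟨x, y, h2, hxy, hvx, hvy⟩ := h𝒞 C hC
    obtain ⟨v0, S⟩ := C
    dsimp only at h2 hvx hvy
    subst h2
    exact BTWAux.key_bound φ v0 x y hxy hvx hvy
  have e2 : ∑ C ∈ 𝒞, ((N : ℝ) * (1/3 + weight φ C)) = (N : ℝ) * ((m : ℝ)/3 + X) := by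
    rw [← Finset.mul_sum, Finset.sum_add_distrib, Finset.sum_const, hm, nsmul_eq_mul, hX]
    ring
  have hsum : (N : ℝ) * ((m : ℝ)/3 + X) ≤
      ∑ β : V ≃ Fin (Fintype.card V), (satCount (BTWAux.ord φ β) 𝒞 : ℝ) := by
    have e1 : ∀ β : V ≃ Fin (Fintype.card V), (satCount (BTWAux.ord φ β) 𝒞 : ℝ) =
        ∑ C ∈ 𝒞, (if Satisfies (BTWAux.ord φ β) C then (1 : ℝ) else 0) := by
      intro β
      rw [satCount, Finset.card_filter]
      push_cast
      rfl
    calc (N : ℝ) * ((m : ℝ)/3 + X) = ∑ C ∈ 𝒞, ((N : ℝ) * (1/3 + weight φ C)) := e2.symm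
      _ ≤ ∑ C ∈ 𝒞, ((Finset.univ.filter fun β => Satisfies (BTWAux.ord φ β) C).card : ℝ) :=
          Finset.sum_le_sum key
      _ = ∑ C ∈ 𝒞, ∑ β : V ≃ Fin (Fintype.card V),
            (if Satisfies (BTWAux.ord φ β) C then (1 : ℝ) else 0) := by
          refine Finset.sum_congr rfl fun C _ => ?_
          rw [Finset.sum_boole]
      _ = ∑ β : V ≃ Fin (Fintype.card V), ∑ C ∈ 𝒞,
            (if Satisfies (BTWAux.ord φ β) C then (1 : ℝ) else 0) := Finset.sum_comm
      _ = ∑ β : V ≃ Fin (Fintype.card V), (satCount (BTWAux.ord φ β) 𝒞 : ℝ) := by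
          refine Finset.sum_congr rfl fun β _ => (e1 β).symm
  have hle : ∑ _β : V ≃ Fin (Fintype.card V), ((m : ℝ)/3 + X) ≤
      ∑ β : V ≃ Fin (Fintype.card V), (satCount (BTWAux.ord φ β) 𝒞 : ℝ) := by
    rwa [Finset.sum_const, Finset.card_univ, ← hN, nsmul_eq_mul]
  obtain ⟨β, -, hβ⟩ := Finset.exists_le_of_sum_le Finset.univ_nonempty hle
  exact ⟨BTWAux.ord φ β, BTWAux.ord_compatible φ β, hβ⟩

end
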